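/- Consider the Suslov system on ℝ⁵ with parameters I₁, I₂ > 0, I₁₃, I₂₃ ∈ ℝ and linear potential U(γ) = a₁γ₁ + a₂γ₂ + a₃γ₃. The scaling vector field û = ω₁∂/∂ω₁ + ω₂∂/∂ω₂ + 2γ₁∂/∂γ₁ + 2γ₂∂/∂γ₂ + 2γ₃∂/∂γ₃ satisfies [û, v] = v everywhere (v is the defining vector field), and the energy E = ½(I₁ω₁² + I₂ω₂²) + a₁γ₁ + a₂γ₂ + a₃γ₃ satisfies ⟨û, ∇E⟩ = 2E everywhere. -/

import Mathlib

/-- The Suslov system on ℝ⁵, coordinates `x = (ω₁, ω₂, γ₁, γ₂, γ₃)`, with parameters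
`I₁, I₂ > 0`, `I₁₃, I₂₃ ∈ ℝ` and the linear potential `U = a₁γ₁ + a₂γ₂ + a₃γ₃`:
`I₁ω̇₁ = −ω₂(I₁₃ω₁+I₂₃ω₂) + γ₂a₃ − γ₃a₂`, `I₂ω̇₂ = ω₁(I₁₃ω₁+I₂₃ω₂) + γ₃a₁ − γ₁a₃`,
`γ̇₁ = −γ₃ω₂`, `γ̇₂ = γ₃ω₁`, `γ̇₃ = γ₁ω₂ − γ₂ω₁`. -/
noncomputable def suslovLin (I₁ I₂ I₁₃ I₂₃ a₁ a₂ a₃ : ℝ) (x : Fin 5 → ℝ) : Fin 5 → ℝ :=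
  ![(-(x 1) * (I₁₃ * x 0 + I₂₃ * x 1) + x 3 * a₃ - x 4 * a₂) / I₁,
    ((x 0) * (I₁₃ * x 0 + I₂₃ * x 1) + x 4 * a₁ - x 2 * a₃) / I₂,
    -(x 4) * x 1,
    (x 4) * x 0,
    x 2 * x 1 - x 3 * x 0]


noncomputable def clm5 (c : Fin 5 → ℝ) : (Fin 5 → ℝ) →L[ℝ] ℝ :=
  ∑ i, c i • ContinuousLinearMap.proj i

@[simp] lemma clm5_apply (c w : Fin 5 → ℝ) :
    clm5 c w = c 0 * w 0 + c 1 * w 1 + c 2 * w 2 + c 3 * w 3 + c 4 * w 4 := by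
  simp [clm5, Fin.sum_univ_five]

lemma hasFDerivAt_u (x : Fin 5 → ℝ) :
    HasFDerivAt (fun y : Fin 5 → ℝ => ![y 0, y 1, 2 * y 2, 2 * y 3, 2 * y 4])
      (ContinuousLinearMap.pi
        ![clm5 ![1,0,0,0,0], clm5 ![0,1,0,0,0], clm5 ![0,0,2,0,0],
          clm5 ![0,0,0,2,0], clm5 ![0,0,0,0,2]]) x := by
  apply hasFDerivAt_pi.2
  intro i
  fin_cases i
  · show HasFDerivAt (fun y : Fin 5 → ℝ => y 0) (clm5 ![1,0,0,0,0]) x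
    refine HasFDerivAt.congr_fderiv (hasFDerivAt_apply (𝕜 := ℝ) (0 : Fin 5) x) ?_
    ext w; simp
  · show HasFDerivAt (fun y : Fin 5 → ℝ => y 1) (clm5 ![0,1,0,0,0]) x
    refine HasFDerivAt.congr_fderiv (hasFDerivAt_apply (𝕜 := ℝ) (1 : Fin 5) x) ?_
    ext w; simp
  · show HasFDerivAt (fun y : Fin 5 → ℝ => 2 * y 2) (clm5 ![0,0,2,0,0]) x
    refine HasFDerivAt.congr_fderiv ((hasFDerivAt_apply (𝕜 := ℝ) (2 : Fin 5) x).const_mul 2) ?_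
    ext w; simp
  · show HasFDerivAt (fun y : Fin 5 → ℝ => 2 * y 3) (clm5 ![0,0,0,2,0]) x
    refine HasFDerivAt.congr_fderiv ((hasFDerivAt_apply (𝕜 := ℝ) (3 : Fin 5) x).const_mul 2) ?_
    ext w; simp
  · show HasFDerivAt (fun y : Fin 5 → ℝ => 2 * y 4) (clm5 ![0,0,0,0,2]) x
    refine HasFDerivAt.congr_fderiv ((hasFDerivAt_apply (𝕜 := ℝ) (4 : Fin 5) x).const_mul 2) ?_
    ext w; simp

lemma hasFDerivAt_v (I₁ I₂ I₁₃ I₂₃ a₁ a₂ a₃ : ℝ) (x : Fin 5 → ℝ) :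
    HasFDerivAt (suslovLin I₁ I₂ I₁₃ I₂₃ a₁ a₂ a₃)
      (ContinuousLinearMap.pi
        ![clm5 ![-(x 1) * I₁₃ / I₁, (-(I₁₃ * x 0 + I₂₃ * x 1) - x 1 * I₂₃) / I₁, 0, a₃ / I₁, -a₂ / I₁],
          clm5 ![((I₁₃ * x 0 + I₂₃ * x 1) + x 0 * I₁₃) / I₂, x 0 * I₂₃ / I₂, -a₃ / I₂, 0, a₁ / I₂],
          clm5 ![0, -(x 4), 0, 0, -(x 1)],
          clm5 ![x 4, 0, 0, 0, x 0],
          clm5 ![-(x 3), x 2, x 1, -(x 0), 0]]) x := by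
  apply hasFDerivAt_pi.2
  intro i
  fin_cases i
  · show HasFDerivAt (fun y : Fin 5 → ℝ =>
        (-(y 1) * (I₁₃ * y 0 + I₂₃ * y 1) + y 3 * a₃ - y 4 * a₂) / I₁)
      (clm5 ![-(x 1) * I₁₃ / I₁, (-(I₁₃ * x 0 + I₂₃ * x 1) - x 1 * I₂₃) / I₁, 0, a₃ / I₁, -a₂ / I₁]) x
    refine HasFDerivAt.congr_fderiv (((((hasFDerivAt_apply (𝕜 := ℝ) (1 : Fin 5) x).neg.mul
        (((hasFDerivAt_apply (𝕜 := ℝ) (0 : Fin 5) x).const_mul I₁₃).add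
          ((hasFDerivAt_apply (𝕜 := ℝ) (1 : Fin 5) x).const_mul I₂₃))).add
        ((hasFDerivAt_apply (𝕜 := ℝ) (3 : Fin 5) x).mul_const a₃)).sub
        ((hasFDerivAt_apply (𝕜 := ℝ) (4 : Fin 5) x).mul_const a₂)).mul_const I₁⁻¹) ?_
    all_goals first
      | (funext y; ring)
      | (ext w; simp <;> ring)
  · show HasFDerivAt (fun y : Fin 5 → ℝ =>
        (y 0 * (I₁₃ * y 0 + I₂₃ * y 1) + y 4 * a₁ - y 2 * a₃) / I₂)
      (clm5 ![((I₁₃ * x 0 + I₂₃ * x 1) + x 0 * I₁₃) / I₂, x 0 * I₂₃ / I₂, -a₃ / I₂, 0, a₁ / I₂]) x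
    refine HasFDerivAt.congr_fderiv (((((hasFDerivAt_apply (𝕜 := ℝ) (0 : Fin 5) x).mul
        (((hasFDerivAt_apply (𝕜 := ℝ) (0 : Fin 5) x).const_mul I₁₃).add
          ((hasFDerivAt_apply (𝕜 := ℝ) (1 : Fin 5) x).const_mul I₂₃))).add
        ((hasFDerivAt_apply (𝕜 := ℝ) (4 : Fin 5) x).mul_const a₁)).sub
        ((hasFDerivAt_apply (𝕜 := ℝ) (2 : Fin 5) x).mul_const a₃)).mul_const I₂⁻¹) ?_
    all_goals first
      | (funext y; ring)
      | (ext w; simp <;> ring)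
  · show HasFDerivAt (fun y : Fin 5 → ℝ => -(y 4) * y 1) (clm5 ![0, -(x 4), 0, 0, -(x 1)]) x
    refine HasFDerivAt.congr_fderiv ((hasFDerivAt_apply (𝕜 := ℝ) (4 : Fin 5) x).neg.mul
      (hasFDerivAt_apply (𝕜 := ℝ) (1 : Fin 5) x)) ?_
    ext w; simp <;> ring
  · show HasFDerivAt (fun y : Fin 5 → ℝ => y 4 * y 0) (clm5 ![x 4, 0, 0, 0, x 0]) x
    refine HasFDerivAt.congr_fderiv ((hasFDerivAt_apply (𝕜 := ℝ) (4 : Fin 5) x).mul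
      (hasFDerivAt_apply (𝕜 := ℝ) (0 : Fin 5) x)) ?_
    ext w; simp <;> ring
  · show HasFDerivAt (fun y : Fin 5 → ℝ => y 2 * y 1 - y 3 * y 0)
      (clm5 ![-(x 3), x 2, x 1, -(x 0), 0]) x
    refine HasFDerivAt.congr_fderiv (((hasFDerivAt_apply (𝕜 := ℝ) (2 : Fin 5) x).mul
      (hasFDerivAt_apply (𝕜 := ℝ) (1 : Fin 5) x)).sub
      ((hasFDerivAt_apply (𝕜 := ℝ) (3 : Fin 5) x).mul
      (hasFDerivAt_apply (𝕜 := ℝ) (0 : Fin 5) x))) ?_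
    ext w; simp <;> ring

/-- For the Suslov system with linear potential, the scaling vector field
`û = ω₁∂/∂ω₁ + ω₂∂/∂ω₂ + 2γ₁∂/∂γ₁ + 2γ₂∂/∂γ₂ + 2γ₃∂/∂γ₃` satisfies `[û, v] = v` everywhere,
and the energy `E = ½(I₁ω₁² + I₂ω₂²) + a₁γ₁ + a₂γ₂ + a₃γ₃` satisfies `⟨û, ∇E⟩ = 2E`. -/
theorem suslov_scaling_symmetry
    (I₁ I₂ I₁₃ I₂₃ a₁ a₂ a₃ : ℝ) (hI₁ : 0 < I₁) (hI₂ : 0 < I₂) :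
    (∀ x : Fin 5 → ℝ,
      VectorField.lieBracket ℝ (fun y => ![y 0, y 1, 2 * y 2, 2 * y 3, 2 * y 4])
          (suslovLin I₁ I₂ I₁₃ I₂₃ a₁ a₂ a₃) x
        = suslovLin I₁ I₂ I₁₃ I₂₃ a₁ a₂ a₃ x) ∧
    (∀ x : Fin 5 → ℝ,
      fderiv ℝ (fun y : Fin 5 → ℝ =>
          (1 / 2) * (I₁ * (y 0) ^ 2 + I₂ * (y 1) ^ 2) + a₁ * y 2 + a₂ * y 3 + a₃ * y 4) x
          ![x 0, x 1, 2 * x 2, 2 * x 3, 2 * x 4]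
        = 2 * ((1 / 2) * (I₁ * (x 0) ^ 2 + I₂ * (x 1) ^ 2)
            + a₁ * x 2 + a₂ * x 3 + a₃ * x 4)) := by
  constructor
  · intro x
    rw [VectorField.lieBracket, (hasFDerivAt_u x).fderiv,
      (hasFDerivAt_v I₁ I₂ I₁₃ I₂₃ a₁ a₂ a₃ x).fderiv]
    funext i
    have h1 : I₁ ≠ 0 := ne_of_gt hI₁
    have h2 : I₂ ≠ 0 := ne_of_gt hI₂
    fin_cases i
    · simp [suslovLin, Pi.sub_apply, ContinuousLinearMap.pi_apply]
      field_simp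
      ring
    · simp [suslovLin, Pi.sub_apply, ContinuousLinearMap.pi_apply]
      field_simp
      ring
    · simp [suslovLin, Pi.sub_apply, ContinuousLinearMap.pi_apply]
      ring
    · simp [suslovLin, Pi.sub_apply, ContinuousLinearMap.pi_apply]
      ring
    · simp [suslovLin, Pi.sub_apply, ContinuousLinearMap.pi_apply]
      ring
  · intro x
    have hE : HasFDerivAt (fun y : Fin 5 → ℝ =>
        (1 / 2) * (I₁ * (y 0) ^ 2 + I₂ * (y 1) ^ 2) + a₁ * y 2 + a₂ * y 3 + a₃ * y 4)
        (clm5 ![I₁ * x 0, I₂ * x 1, a₁, a₂, a₃]) x := by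
      refine HasFDerivAt.congr_fderiv (HasFDerivAt.congr_of_eventuallyEq (((((((hasFDerivAt_apply (𝕜 := ℝ) (0 : Fin 5) x).mul
          (hasFDerivAt_apply (𝕜 := ℝ) (0 : Fin 5) x)).const_mul I₁).add
          (((hasFDerivAt_apply (𝕜 := ℝ) (1 : Fin 5) x).mul
          (hasFDerivAt_apply (𝕜 := ℝ) (1 : Fin 5) x)).const_mul I₂)).const_mul
          ((1:ℝ)/2)).add ((hasFDerivAt_apply (𝕜 := ℝ) (2 : Fin 5) x).const_mul a₁)).add
          (((hasFDerivAt_apply (𝕜 := ℝ) (3 : Fin 5) x).const_mul a₂).add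
          ((hasFDerivAt_apply (𝕜 := ℝ) (4 : Fin 5) x).const_mul a₃))) (Filter.Eventually.of_forall (congrFun ?_))) ?_
      · funext y; simp only [Pi.add_apply, Pi.mul_apply]; ring
      · ext w; simp <;> ring
    rw [hE.fderiv]
    simp
    ring
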